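/- Fix an integer s ≥ 3 and a constant c > 0. There exists a constant C = C(s,c) such that every K_s-free (n,d,λ)-graph with λ ≤ c·√d satisfies d ≤ C·n^{1 − 1/(2s−3)}. -/

import Mathlib

open SimpleGraph Real

/-- `G` contains a copy of `F` as a subgraph, i.e. there is an injective
graph homomorphism from `F` to `G`. -/
def ContainsCopy {α β : Type*} (F : SimpleGraph α) (G : SimpleGraph β) : Prop :=
  ∃ f : F →g G, Function.Injective f

/-- `G` is `F`-free: it contains no subgraph isomorphic to `F`. -/
def IsFreeOf {α β : Type*} (G : SimpleGraph β) (F : SimpleGraph α) : Prop :=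
  ¬ ContainsCopy F G

/-- `G` has an independent set of size `t`. -/
def HasIndepSetOfSize {V : Type*} (G : SimpleGraph V) (t : ℕ) : Prop :=
  ∃ s : Finset V, s.card = t ∧ ∀ v ∈ s, ∀ w ∈ s, ¬ G.Adj v w

/-- The adjacency matrix of a simple graph over `ℝ` is Hermitian. -/
theorem adjMatrix_isHermitian {V : Type*} [Fintype V] (G : SimpleGraph V)
    [DecidableRel G.Adj] : (G.adjMatrix ℝ).IsHermitian := by
  rw [Matrix.IsHermitian, Matrix.conjTranspose_eq_transpose_of_trivial]
  exact G.isSymm_adjMatrix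

/-- `G` is an `(n,d,λ)`-graph: an `n`-vertex `d`-regular graph each of whose
adjacency-matrix eigenvalues, other than the largest one (which is `d`), has
absolute value at most `lam`. -/
def IsNDLGraph {V : Type*} [Fintype V] [DecidableEq V] (G : SimpleGraph V)
    (n d : ℕ) (lam : ℝ) : Prop :=
  letI : DecidableRel G.Adj := Classical.decRel G.Adj
  Fintype.card V = n ∧ G.IsRegularOfDegree d ∧
    ∃ i₀ : V, (adjMatrix_isHermitian G).eigenvalues i₀ = (d : ℝ) ∧
      ∀ i : V, i ≠ i₀ → |(adjMatrix_isHermitian G).eigenvalues i| ≤ lam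

/-- The number of independent sets of size `t` in `G`. -/
noncomputable def numIndepSets {V : Type*} (G : SimpleGraph V) (t : ℕ) : ℕ :=
  Nat.card {s : Finset V // s.card = t ∧ ∀ v ∈ s, ∀ w ∈ s, ¬ G.Adj v w}



open Finset Matrix
open scoped RealInnerProductSpace

theorem adjMatrix_isHermitian' {V : Type*} [Fintype V] (G : SimpleGraph V)
    [DecidableRel G.Adj] : (G.adjMatrix ℝ).IsHermitian := adjMatrix_isHermitian G

section Spectral

variable {V : Type} [Fintype V] [DecidableEq V]

/-- mulVec as a map on Euclidean space -/
noncomputable def mv (A : Matrix V V ℝ) (x : EuclideanSpace ℝ V) : EuclideanSpace ℝ V :=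
  (WithLp.equiv 2 (V → ℝ)).symm (A.mulVec ((WithLp.equiv 2 (V → ℝ)) x))

lemma inner_eq_sum (x y : EuclideanSpace ℝ V) : ⟪x, y⟫ = ∑ v, x v * y v := by
  simp [PiLp.inner_apply, RCLike.inner_apply]
  exact Finset.sum_congr rfl fun _ _ => mul_comm _ _

lemma inner_mv (x y : EuclideanSpace ℝ V) (A : Matrix V V ℝ) :
    ⟪x, mv A y⟫ = ∑ u, ∑ v, x u * (A u v * y v) := by
  rw [inner_eq_sum]
  refine Finset.sum_congr rfl fun u _ => ?_
  have : (mv A y) u = ∑ v, A u v * y v := rfl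
  rw [this, Finset.mul_sum]

lemma mv_symm {A : Matrix V V ℝ} (hA : ∀ u v, A u v = A v u) (x y : EuclideanSpace ℝ V) :
    ⟪x, mv A y⟫ = ⟪mv A x, y⟫ := by
  rw [inner_mv, real_inner_comm, inner_mv]
  rw [Finset.sum_comm]
  refine Finset.sum_congr rfl fun u _ => Finset.sum_congr rfl fun v _ => ?_
  rw [hA v u]; ring

lemma adj_symm (G : SimpleGraph V) [DecidableRel G.Adj] (u v : V) :
    (G.adjMatrix ℝ) u v = (G.adjMatrix ℝ) v u := by
  simp [SimpleGraph.adjMatrix, G.adj_comm u v]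

lemma spectral_bound (G : SimpleGraph V) [DecidableRel G.Adj]
    {d : ℕ} (hreg : G.IsRegularOfDegree d) {lam : ℝ}
    (i₀ : V) (hlt : lam < d)
    (hev : ∀ i, i ≠ i₀ → |(adjMatrix_isHermitian' G).eigenvalues i| ≤ lam)
    (x : EuclideanSpace ℝ V) (hx : ∑ v, x v = 0) :
    -lam * ∑ v, (x v)^2 ≤ ∑ u, ∑ v, x u * ((G.adjMatrix ℝ) u v * x v) := by
  classical
  set A := G.adjMatrix ℝ with hA
  set hH := adjMatrix_isHermitian' G with hHdef
  set B := hH.eigenvectorBasis with hB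
  set μ := hH.eigenvalues with hμ
  have hnonempty : Nonempty V := ⟨i₀⟩
  set one : EuclideanSpace ℝ V := (WithLp.equiv 2 (V → ℝ)).symm (fun _ => 1) with hone
  have hone_apply : ∀ v, one v = 1 := fun v => rfl
  have hAone : mv A one = (d : ℝ) • one := by
    have : ∀ v, (mv A one) v = (d : ℝ) * one v := by
      intro v
      have h1 : (mv A one) v = (A.mulVec (fun _ => (1:ℝ))) v := rfl
      rw [h1, hone_apply, mul_one]
      have h2 : (A.mulVec (fun _ => (1:ℝ))) v = (G.degree v : ℝ) := by
        simp [hA]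
      rw [h2, hreg v]
    ext v
    rw [this v]; rfl
  have hmvB : ∀ i : V, mv A (B i) = μ i • B i := by
    intro i
    have h := hH.mulVec_eigenvectorBasis i
    have : mv A (B i)
        = (WithLp.equiv 2 (V → ℝ)).symm (μ i • ((WithLp.equiv 2 (V → ℝ)) (B i))) := by
      rw [mv]; exact congrArg (WithLp.equiv 2 (V → ℝ)).symm h
    rw [this]
    rfl
  have hsym := mv_symm (A := A) (adj_symm G)
  -- inner products with eigenvectors
  have hinner_mvB : ∀ (i : V) (y : EuclideanSpace ℝ V), ⟪B i, mv A y⟫ = μ i * ⟪B i, y⟫ := by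
    intro i y
    rw [hsym (B i) y, hmvB i, inner_eq_sum, inner_eq_sum, Finset.mul_sum]
    refine Finset.sum_congr rfl fun v _ => ?_
    have : (μ i • B i) v = μ i * B i v := rfl
    rw [this]; ring
  -- orthogonality of non-principal eigenvectors to the all-ones vector
  have horth : ∀ i, i ≠ i₀ → ⟪B i, one⟫ = 0 := by
    intro i hi
    have h1 : ⟪B i, mv A one⟫ = (d : ℝ) * ⟪B i, one⟫ := by
      rw [hAone, inner_eq_sum, inner_eq_sum, Finset.mul_sum]
      refine Finset.sum_congr rfl fun v _ => ?_
      have : ((d:ℝ) • one) v = (d:ℝ) * one v := rfl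
      rw [this]; ring
    have h2 : ⟪B i, mv A one⟫ = μ i * ⟪B i, one⟫ := hinner_mvB i one
    have hne : μ i ≠ (d : ℝ) := by
      have h3 := hev i hi
      intro h; rw [h] at h3
      have : (d:ℝ) ≤ lam := le_trans (le_abs_self _) h3
      linarith
    have h4 : (μ i - (d:ℝ)) * ⟪B i, one⟫ = 0 := by rw [sub_mul, h2.symm.trans h1]; ring
    rcases mul_eq_zero.mp h4 with h | h
    · exact absurd (by linarith [sub_eq_zero.mp h] : μ i = (d:ℝ)) hne
    · exact h
  -- the coefficient of x along the principal eigenvector vanishes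
  have hxone : ⟪x, one⟫ = 0 := by
    rw [inner_eq_sum]; simpa [hone_apply] using hx
  have hBone : ⟪B i₀, one⟫ ≠ 0 := by
    intro h0
    have hexp : ⟪one, one⟫ = ∑ i, ⟪one, B i⟫ * ⟪B i, one⟫ := (B.sum_inner_mul_inner one one).symm
    have hz : ∀ i, ⟪one, B i⟫ * ⟪B i, one⟫ = 0 := by
      intro i
      by_cases hi : i = i₀
      · rw [hi, h0, mul_zero]
      · rw [horth i hi, mul_zero]
    have : ⟪one, one⟫ = 0 := by rw [hexp, Finset.sum_congr rfl fun i _ => hz i]; simp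
    rw [inner_eq_sum] at this
    simp only [hone_apply, mul_one, Finset.sum_const, nsmul_eq_mul] at this
    have hcard : 0 < Fintype.card V := Fintype.card_pos
    rw [Finset.card_univ] at this
    have : (Fintype.card V : ℝ) = 0 := by linarith
    exact_mod_cast absurd this (by positivity)
  have hc0 : ⟪B i₀, x⟫ = 0 := by
    have hexp : ⟪x, one⟫ = ∑ i, ⟪x, B i⟫ * ⟪B i, one⟫ := (B.sum_inner_mul_inner x one).symm
    have : ∑ i, ⟪x, B i⟫ * ⟪B i, one⟫ = ⟪x, B i₀⟫ * ⟪B i₀, one⟫ := by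
      rw [Finset.sum_eq_single i₀]
      · intro i _ hi; rw [horth i hi, mul_zero]
      · intro h; exact absurd (Finset.mem_univ i₀) h
    rw [hxone, this] at hexp
    rcases mul_eq_zero.mp hexp.symm with h | h
    · rw [real_inner_comm]; exact h
    · exact absurd h hBone
  -- expansion of the quadratic form and the norm
  have hquad : ⟪x, mv A x⟫ = ∑ i, μ i * (⟪B i, x⟫)^2 := by
    rw [← B.sum_inner_mul_inner x (mv A x)]
    refine Finset.sum_congr rfl fun i _ => ?_
    rw [hinner_mvB i x, real_inner_comm x (B i)]
    ring
  have hnorm : ⟪x, x⟫ = ∑ i, (⟪B i, x⟫)^2 := by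
    rw [← B.sum_inner_mul_inner x x]
    refine Finset.sum_congr rfl fun i _ => ?_
    rw [real_inner_comm x (B i)]; ring
  have key : -lam * ⟪x, x⟫ ≤ ⟪x, mv A x⟫ := by
    rw [hquad, hnorm, Finset.mul_sum]
    refine Finset.sum_le_sum fun i _ => ?_
    by_cases hi : i = i₀
    · rw [hi, hc0]; ring_nf; exact le_rfl
    · have h1 := hev i hi
      have h2 : -lam ≤ μ i := by
        have := abs_le.mp h1
        linarith [this.1]
      have h3 : (0:ℝ) ≤ (⟪B i, x⟫)^2 := sq_nonneg _
      nlinarith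
  calc -lam * ∑ v, (x v)^2 = -lam * ⟪x, x⟫ := by
        rw [inner_eq_sum]
        congr 1
        exact Finset.sum_congr rfl fun v _ => (sq (x v)).symm ▸ by ring
    _ ≤ ⟪x, mv A x⟫ := key
    _ = ∑ u, ∑ v, x u * (A u v * x v) := inner_mv x x A

end Spectral

section Mixing

variable {V : Type} [Fintype V] [DecidableEq V]

lemma count_filter_eq (U : Finset V) (p : V → Prop) [DecidablePred p] :
    ∑ v, (if v ∈ U ∧ p v then (1:ℝ) else 0) = ((U.filter p).card : ℝ) := by
  simp [Finset.sum_boole]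
  congr 1
  ext v; simp

lemma sum_deg_bound (G : SimpleGraph V) [DecidableRel G.Adj]
    {d : ℕ} (hreg : G.IsRegularOfDegree d) {lam : ℝ} (hlam : 0 ≤ lam)
    (i₀ : V) (hlt : lam < d)
    (hev : ∀ i, i ≠ i₀ → |(adjMatrix_isHermitian' G).eigenvalues i| ≤ lam)
    (U : Finset V) :
    (d:ℝ) * (U.card:ℝ)^2 / (Fintype.card V : ℝ) - lam * U.card
      ≤ ∑ u ∈ U, ((U.filter (fun w => G.Adj u w)).card : ℝ) := by
  classical
  set A := G.adjMatrix ℝ with hA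
  have hn : (0:ℝ) < (Fintype.card V : ℝ) := by
    have : Nonempty V := ⟨i₀⟩
    exact_mod_cast Fintype.card_pos
  set n : ℝ := (Fintype.card V : ℝ) with hn'
  set r : ℝ := (U.card : ℝ) / n with hr
  set x : EuclideanSpace ℝ V :=
    (WithLp.equiv 2 (V → ℝ)).symm (fun v => (if v ∈ U then (1:ℝ) else 0) - r) with hx
  have hx_apply : ∀ v, x v = (if v ∈ U then (1:ℝ) else 0) - r := fun v => rfl
  have hind : ∑ v, (if v ∈ U then (1:ℝ) else 0) = (U.card : ℝ) := by simp
  have hxsum : ∑ v, x v = 0 := by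
    simp only [hx_apply, Finset.sum_sub_distrib, hind, Finset.sum_const, Finset.card_univ,
      nsmul_eq_mul]
    rw [hr, hn']
    field_simp
    have hc : (Fintype.card V : ℝ) ≠ 0 := ne_of_gt hn
    rw [div_self hc, sub_self, mul_zero]
  have hspec := spectral_bound G hreg i₀ hlt hev x hxsum
  set degU : V → ℝ := fun u => ((U.filter (fun w => G.Adj u w)).card : ℝ) with hdegU
  set S : ℝ := ∑ u ∈ U, degU u with hS
  -- inner sums of the quadratic form
  have hAx : ∀ u, (∑ v, A u v * x v) = degU u - (d:ℝ) * r := by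
    intro u
    have h1 : ∀ v, A u v * x v = (if v ∈ U ∧ G.Adj u v then (1:ℝ) else 0)
        - (if G.Adj u v then r else 0) := by
      intro v
      by_cases hadj : G.Adj u v <;> by_cases hU : v ∈ U <;>
        simp [hA, hadj, hU, hx_apply, and_comm]
    rw [Finset.sum_congr rfl fun v _ => h1 v, Finset.sum_sub_distrib]
    have h2 : ∑ v, (if v ∈ U ∧ G.Adj u v then (1:ℝ) else 0) = degU u :=
      count_filter_eq U (fun v => G.Adj u v)
    have h3 : ∑ v, (if G.Adj u v then r else 0) = (d:ℝ) * r := by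
      rw [← Finset.sum_filter, Finset.sum_const, ← SimpleGraph.neighborFinset_eq_filter]
      have : (G.neighborFinset u).card = d := hreg u
      rw [this]; simp [nsmul_eq_mul]
    rw [h2, h3]
  -- column sums
  have hcol : ∑ u, degU u = (d:ℝ) * U.card := by
    have h1 : ∀ u, degU u = ∑ v, (if v ∈ U ∧ G.Adj u v then (1:ℝ) else 0) :=
      fun u => (count_filter_eq U (fun v => G.Adj u v)).symm
    rw [Finset.sum_congr rfl fun u _ => h1 u, Finset.sum_comm]
    have h2 : ∀ v, ∑ u, (if v ∈ U ∧ G.Adj u v then (1:ℝ) else 0)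
        = if v ∈ U then (d:ℝ) else 0 := by
      intro v
      by_cases hU : v ∈ U
      · simp only [hU, true_and, if_true]
        have : ∀ u, (if G.Adj u v then (1:ℝ) else 0) = (if G.Adj v u then (1:ℝ) else 0) := by
          intro u; exact if_congr (G.adj_comm u v) rfl rfl
        rw [Finset.sum_congr rfl fun u _ => this u, Finset.sum_boole,
          ← SimpleGraph.neighborFinset_eq_filter]
        have : (G.neighborFinset v).card = d := hreg v
        rw [this]
      · simp [hU]
    rw [Finset.sum_congr rfl fun v _ => h2 v, ← Finset.sum_filter]
    have : Finset.univ.filter (fun v => v ∈ U) = U := by ext v; simp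
    rw [this, Finset.sum_const, nsmul_eq_mul, mul_comm]
  -- row sums weighted by indicator
  have hrow : ∑ u, (if u ∈ U then (1:ℝ) else 0) * degU u = S := by
    have : ∀ u, (if u ∈ U then (1:ℝ) else 0) * degU u
        = if u ∈ U then degU u else 0 := by
      intro u; by_cases hU : u ∈ U <;> simp [hU]
    rw [Finset.sum_congr rfl fun u _ => this u, ← Finset.sum_filter]
    have : Finset.univ.filter (fun v => v ∈ U) = U := by ext v; simp
    rw [this]
  -- total quadratic form
  have hquad : ∑ u, ∑ v, x u * (A u v * x v)
      = S - 2 * (d:ℝ) * r * U.card + (d:ℝ) * r^2 * n := by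
    have h1 : ∀ u, ∑ v, x u * (A u v * x v) = x u * (degU u - (d:ℝ) * r) := by
      intro u; rw [← Finset.mul_sum, hAx u]
    rw [Finset.sum_congr rfl fun u _ => h1 u]
    have h2 : ∀ u, x u * (degU u - (d:ℝ) * r)
        = (if u ∈ U then (1:ℝ) else 0) * degU u
          - (d:ℝ) * r * (if u ∈ U then (1:ℝ) else 0)
          - r * degU u + r * ((d:ℝ) * r) := by
      intro u; rw [hx_apply]; ring
    rw [Finset.sum_congr rfl fun u _ => h2 u]
    simp only [Finset.sum_add_distrib, Finset.sum_sub_distrib, hrow, ← Finset.mul_sum, hind,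
      hcol, Finset.sum_const, Finset.card_univ, nsmul_eq_mul]
    rw [← hn']
    ring
  -- norm
  have hnormval : ∑ v, (x v)^2 = (U.card : ℝ) - 2 * r * U.card + n * r^2 := by
    have h1 : ∀ v, (x v)^2 = (if v ∈ U then (1:ℝ) else 0)
        - 2 * r * (if v ∈ U then (1:ℝ) else 0) + r^2 := by
      intro v; rw [hx_apply]; split_ifs <;> ring
    rw [Finset.sum_congr rfl fun v _ => h1 v]
    simp only [Finset.sum_add_distrib, Finset.sum_sub_distrib, hind, ← Finset.mul_sum,
      Finset.sum_const, Finset.card_univ, nsmul_eq_mul]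
    try rw [← hn']
    try ring
  rw [hquad, hnormval] at hspec
  have hrn : r * n = (U.card : ℝ) := by rw [hr]; field_simp
  have hUnn : (0:ℝ) ≤ (U.card : ℝ) := Nat.cast_nonneg _
  have hrnn : (0:ℝ) ≤ r := by rw [hr]; positivity
  have hd0 : (0:ℝ) ≤ (d:ℝ) := Nat.cast_nonneg _
  have key : (d:ℝ) * (U.card:ℝ)^2 / n = 2 * (d:ℝ) * r * U.card - (d:ℝ) * r^2 * n := by
    have : (U.card : ℝ) = r * n := hrn.symm
    rw [this]
    field_simp
    ring
  rw [key]
  have h6 : n * r^2 = (U.card:ℝ) * r := by rw [sq, ← mul_assoc, mul_comm n r, hrn]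
  have hexp : -lam * ((U.card:ℝ) - 2*r*(U.card:ℝ) + n*r^2)
      = -lam*(U.card:ℝ) + 2*lam*r*(U.card:ℝ) - lam*((U.card:ℝ)*r) := by
    rw [h6]; ring
  rw [hexp] at hspec
  have h7 : 0 ≤ lam * r * (U.card:ℝ) := mul_nonneg (mul_nonneg hlam hrnn) hUnn
  linarith

end Mixing

section Clique

variable {V : Type} [Fintype V] [DecidableEq V]

lemma exists_good_vertex (G : SimpleGraph V) [DecidableRel G.Adj]
    {d : ℕ} (hreg : G.IsRegularOfDegree d) {lam : ℝ} (hlam : 0 ≤ lam)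
    (i₀ : V) (hlt : lam < d)
    (hev : ∀ i, i ≠ i₀ → |(adjMatrix_isHermitian' G).eigenvalues i| ≤ lam)
    (U : Finset V) (hU : U.Nonempty) :
    ∃ u ∈ U, (d:ℝ) * U.card / (Fintype.card V : ℝ) - lam
      ≤ ((U.filter (fun w => G.Adj u w)).card : ℝ) := by
  refine Finset.exists_le_of_sum_le hU ?_
  have h := sum_deg_bound G hreg hlam i₀ hlt hev U
  calc ∑ _u ∈ U, ((d:ℝ) * U.card / (Fintype.card V : ℝ) - lam)
      = (U.card : ℝ) * ((d:ℝ) * U.card / (Fintype.card V : ℝ) - lam) := by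
        rw [Finset.sum_const, nsmul_eq_mul]
    _ = (d:ℝ) * (U.card:ℝ)^2 / (Fintype.card V : ℝ) - lam * U.card := by ring
    _ ≤ _ := h

lemma clique_in_large_set (G : SimpleGraph V) [DecidableRel G.Adj]
    {d : ℕ} (hreg : G.IsRegularOfDegree d) {lam : ℝ} (hlam : 0 ≤ lam)
    (i₀ : V) (hlt : lam < d) (hd : 0 < d)
    (hev : ∀ i, i ≠ i₀ → |(adjMatrix_isHermitian' G).eigenvalues i| ≤ lam) :
    ∀ (t : ℕ) (U : Finset V),
      2 * lam * (Fintype.card V : ℝ) / d * (2 * (Fintype.card V : ℝ) / d)^t < (U.card : ℝ) →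
      ∃ K : Finset V, K ⊆ U ∧ G.IsNClique (t+2) K := by
  have hnV : Nonempty V := ⟨i₀⟩
  have hn : (0:ℝ) < (Fintype.card V : ℝ) := by exact_mod_cast Fintype.card_pos
  set n : ℝ := (Fintype.card V : ℝ) with hn'
  have hdR : (0:ℝ) < (d:ℝ) := by exact_mod_cast hd
  have hdn : (d:ℝ) < n := by
    have h1 := G.degree_lt_card_verts i₀
    rw [hreg i₀] at h1
    rw [hn']; exact_mod_cast h1
  have hfac : (1:ℝ) ≤ 2 * n / d := by
    rw [le_div_iff₀ hdR]; linarith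
  have hτ : (0:ℝ) ≤ 2 * lam * n / d := by positivity
  intro t
  induction t with
  | zero =>
    intro U hU
    have hUpos : (0:ℝ) < U.card := lt_of_le_of_lt (by simpa using hτ) hU
    have hUne : U.Nonempty := by
      rw [← Finset.card_pos]
      exact_mod_cast hUpos
    obtain ⟨u, huU, hu⟩ := exists_good_vertex G hreg hlam i₀ hlt hev U hUne
    have hpos : (0:ℝ) < ((U.filter (fun w => G.Adj u w)).card : ℝ) := by
      have h2 : lam * n / d < (U.card : ℝ) := by
        calc lam * n / d ≤ 2 * lam * n / d * 1 := by
              rw [mul_one]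
              gcongr ?_ / d
              nlinarith
          _ < (U.card:ℝ) := by simpa using hU
      have h3 : lam < (d:ℝ) * U.card / n := by
        rw [div_lt_iff₀ hdR] at h2
        rw [lt_div_iff₀ hn]
        nlinarith
      linarith
    have hne : (U.filter (fun w => G.Adj u w)).Nonempty := by
      rw [← Finset.card_pos]
      exact_mod_cast hpos
    obtain ⟨w, hw⟩ := hne
    rw [Finset.mem_filter] at hw
    refine ⟨{u, w}, ?_, ?_, ?_⟩
    · intro z hz
      rcases Finset.mem_insert.mp hz with h | h
      · rwa [h]
      · rw [Finset.mem_singleton.mp h]; exact hw.1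
    · rw [Finset.coe_insert, Finset.coe_singleton]
      exact SimpleGraph.isClique_pair.mpr (fun _ => hw.2)
    · exact Finset.card_pair (G.ne_of_adj hw.2)
  | succ t ih =>
    intro U hU
    have hpow : (1:ℝ) ≤ (2 * n / d)^(t+1) := one_le_pow₀ hfac
    have hUτ : 2 * lam * n / d ≤ (U.card : ℝ) := by
      calc 2 * lam * n / d = 2 * lam * n / d * 1 := by ring
        _ ≤ 2 * lam * n / d * (2*n/d)^(t+1) := by
            exact mul_le_mul_of_nonneg_left hpow hτ
        _ ≤ (U.card : ℝ) := le_of_lt hU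
    have hUpos : (0:ℝ) < (U.card:ℝ) :=
      lt_of_le_of_lt (mul_nonneg hτ (by positivity)) hU
    have hUne : U.Nonempty := by
      rw [← Finset.card_pos]
      exact_mod_cast hUpos
    obtain ⟨u, huU, hu⟩ := exists_good_vertex G hreg hlam i₀ hlt hev U hUne
    set U' := U.filter (fun w => G.Adj u w) with hU'
    have h1 : lam ≤ (d:ℝ) * U.card / (2*n) := by
      rw [le_div_iff₀ (by positivity)]
      rw [div_le_iff₀ hdR] at hUτ
      nlinarith
    have h2 : (d:ℝ) * U.card / (2*n) ≤ (U'.card : ℝ) := by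
      have : (d:ℝ) * U.card / n - lam ≥ (d:ℝ) * U.card / (2*n) := by
        have hsplit : (d:ℝ) * U.card / n = (d:ℝ)*U.card/(2*n) + (d:ℝ)*U.card/(2*n) := by
          field_simp; ring
        linarith
      linarith [hu]
    have h3 : 2 * lam * n / d * (2 * n / d)^t < (U'.card : ℝ) := by
      have hkey : 2*lam*n/d*(2*n/d)^t = (d/(2*n)) * (2*lam*n/d*(2*n/d)^(t+1)) := by
        have hx1 : (d:ℝ)/(2*n) * (2*n/d) = 1 := by
          rw [div_mul_div_comm, mul_comm (d:ℝ),
            div_self (mul_ne_zero (mul_ne_zero two_ne_zero (ne_of_gt hn)) (ne_of_gt hdR))]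
        rw [pow_succ]
        linear_combination (-(2*lam*n/d*(2*n/d)^t)) * hx1
      rw [hkey]
      calc (d/(2*n)) * (2*lam*n/d*(2*n/d)^(t+1)) < (d/(2*n)) * U.card := by
            exact mul_lt_mul_of_pos_left hU (by positivity)
        _ = (d:ℝ) * U.card / (2*n) := by ring
        _ ≤ (U'.card : ℝ) := h2
    obtain ⟨K', hK'sub, hK'⟩ := ih U' h3
    refine ⟨insert u K', ?_, ?_⟩
    · apply Finset.insert_subset huU
      exact hK'sub.trans (Finset.filter_subset _ _)
    · have hadj : ∀ b ∈ K', G.Adj u b := fun b hb => (Finset.mem_filter.mp (hK'sub hb)).2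
      exact hK'.insert hadj

end Clique

/-- Sudakov–Szabó–Vu bound, as stated in the paper.
Fix `s ≥ 3` and `c > 0`. There is a constant `C = C(s,c)` such that every
`K_s`-free `(n,d,λ)`-graph with `λ ≤ c·√d` satisfies `d ≤ C·n^{1-1/(2s-3)}`. -/
theorem statement18 (s : ℕ) (hs : 3 ≤ s) (c : ℝ) (hc : 0 < c) :
    ∃ C : ℝ, ∀ (V : Type) [Fintype V] [DecidableEq V]
      (G : SimpleGraph V) (n d : ℕ) (lam : ℝ),
      IsNDLGraph G n d lam → G.CliqueFree s → lam ≤ c * Real.sqrt d →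
      (d : ℝ) ≤ C * (n : ℝ) ^ (1 - 1 / (2 * (s : ℝ) - 3)) := by
  refine ⟨max (c^2) (((2:ℝ)^(s-1) * c) ^ (((s:ℝ) - 3/2))⁻¹), ?_⟩
  intro V _ _ G n d lam hndl hfree hlc
  letI : DecidableRel G.Adj := Classical.decRel G.Adj
  obtain ⟨hn, hreg, i₀, -, hev⟩ := hndl
  subst hn
  set C : ℝ := max (c^2) (((2:ℝ)^(s-1) * c) ^ (((s:ℝ) - 3/2))⁻¹) with hCdef
  have hnV : Nonempty V := ⟨i₀⟩
  have hn1 : 1 ≤ Fintype.card V := Fintype.card_pos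
  set N : ℝ := (Fintype.card V : ℝ) with hN
  have hN1 : (1:ℝ) ≤ N := by rw [hN]; exact_mod_cast hn1
  have hNpos : (0:ℝ) < N := lt_of_lt_of_le one_pos hN1
  have hsR : (3:ℝ) ≤ (s:ℝ) := by exact_mod_cast hs
  have hepos : 0 ≤ 1 - 1/(2*(s:ℝ)-3) := by
    have h1 : 1/(2*(s:ℝ)-3) ≤ 1 := by
      rw [div_le_one (by linarith)]; linarith
    linarith
  have hNe1 : (1:ℝ) ≤ N ^ (1 - 1/(2*(s:ℝ)-3)) := Real.one_le_rpow hN1 hepos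
  have hNe0 : (0:ℝ) ≤ N ^ (1 - 1/(2*(s:ℝ)-3)) := le_trans zero_le_one hNe1
  have hCc2 : c^2 ≤ C := le_max_left _ _
  have hC0 : (0:ℝ) ≤ C := le_trans (by positivity) hCc2
  rcases Nat.eq_zero_or_pos d with hd0 | hdpos
  · rw [hd0]
    push_cast
    exact mul_nonneg hC0 hNe0
  have hdR : (0:ℝ) < (d:ℝ) := by exact_mod_cast hdpos
  set lam' : ℝ := max lam 0 with hlamdef
  have hlam0 : (0:ℝ) ≤ lam' := le_max_right _ _
  have hev' : ∀ i, i ≠ i₀ → |(adjMatrix_isHermitian' G).eigenvalues i| ≤ lam' :=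
    fun i hi => (hev i hi).trans (le_max_left _ _)
  have hlc' : lam' ≤ c * Real.sqrt d := max_le hlc (by positivity)
  by_cases hcase : (d:ℝ) ≤ lam'
  · -- degenerate case : d ≤ c²
    have hsqrt : Real.sqrt d * Real.sqrt d = (d:ℝ) := Real.mul_self_sqrt (by positivity)
    have hsp : (0:ℝ) < Real.sqrt d := Real.sqrt_pos.mpr hdR
    have h1 : Real.sqrt d * Real.sqrt d ≤ c * Real.sqrt d := by
      rw [hsqrt]; exact hcase.trans hlc'
    have h2 : Real.sqrt d ≤ c := le_of_mul_le_mul_right h1 hsp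
    have h3 : (d:ℝ) ≤ c^2 := by
      rw [← hsqrt, sq]
      exact mul_le_mul h2 h2 (le_of_lt hsp) (le_of_lt hc)
    calc (d:ℝ) ≤ c^2 := h3
      _ ≤ c^2 * N ^ (1 - 1/(2*(s:ℝ)-3)) := le_mul_of_one_le_right (by positivity) hNe1
      _ ≤ C * N ^ (1 - 1/(2*(s:ℝ)-3)) := mul_le_mul_of_nonneg_right hCc2 hNe0
  push_neg at hcase
  -- main case
  set k : ℕ := s - 2 with hkdef
  have hclaim : N ≤ 2 * lam' * N / d * (2 * N / d)^k := by
    by_contra hcon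
    push_neg at hcon
    obtain ⟨K, -, hK⟩ := clique_in_large_set G hreg hlam0 i₀ hcase hdpos hev' k Finset.univ
      (by rw [Finset.card_univ, ← hN]; exact hcon)
    rw [show k + 2 = s from by omega] at hK
    exact hfree K hK
  have hrw : 2*lam'*N/(d:ℝ) * (2*N/(d:ℝ))^k = (2*lam'*N*(2*N)^k)/((d:ℝ)^(k+1)) := by
    rw [div_pow, pow_succ]
    field_simp
    try ring
    try exact Or.inl trivial
  rw [hrw, le_div_iff₀ (by positivity)] at hclaim
  have h5 : (d:ℝ)^(k+1) ≤ 2*lam'*(2*N)^k := by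
    have h6 : N * ((d:ℝ)^(k+1)) ≤ N * (2*lam'*(2*N)^k) := by linarith [hclaim]
    exact le_of_mul_le_mul_left h6 hNpos
  have key : (d:ℝ)^(k+1) ≤ 2^(k+1)*lam'*N^k := by
    have h7 : 2*lam'*(2*N)^k = 2^(k+1)*lam'*N^k := by rw [mul_pow, pow_succ]; ring
    linarith [h5]
  have key2 : (d:ℝ)^(k+1) ≤ 2^(k+1)*c*Real.sqrt (d:ℝ)*N^k := by
    calc (d:ℝ)^(k+1) ≤ 2^(k+1)*lam'*N^k := key
      _ ≤ 2^(k+1)*(c*Real.sqrt (d:ℝ))*N^k := by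
          apply mul_le_mul_of_nonneg_right _ (by positivity)
          exact mul_le_mul_of_nonneg_left hlc' (by positivity)
      _ = 2^(k+1)*c*Real.sqrt (d:ℝ)*N^k := by ring
  -- convert to rpow
  have hkR : (k:ℝ) = (s:ℝ) - 2 := by
    have h8 : k + 2 = s := by omega
    have h9 : ((k:ℝ) + 2 : ℝ) = (s:ℝ) := by exact_mod_cast congrArg (Nat.cast : ℕ → ℝ) h8
    linarith
  have hrp1 : (d:ℝ)^(k+1) = (d:ℝ) ^ (((k:ℝ)+1) : ℝ) := by
    rw [← Real.rpow_natCast (d:ℝ) (k+1)]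
    push_cast
    ring_nf
  have hp : (0:ℝ) < (s:ℝ) - 3/2 := by linarith
  have key3 : (d:ℝ) ^ (((s:ℝ) - 3/2) : ℝ) ≤ 2^(k+1)*c*N^k := by
    have hs2 : (0:ℝ) < (d:ℝ)^((1:ℝ)/2) := Real.rpow_pos_of_pos hdR _
    apply le_of_mul_le_mul_right _ hs2
    have hmul : (d:ℝ) ^ (((s:ℝ) - 3/2) : ℝ) * (d:ℝ)^((1:ℝ)/2) = (d:ℝ) ^ (((k:ℝ)+1) : ℝ) := by
      rw [← Real.rpow_add hdR, hkR]
      congr 1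
      ring
    calc (d:ℝ) ^ (((s:ℝ) - 3/2) : ℝ) * (d:ℝ)^((1:ℝ)/2)
        = (d:ℝ) ^ (((k:ℝ)+1) : ℝ) := hmul
      _ = (d:ℝ)^(k+1) := hrp1.symm
      _ ≤ 2^(k+1)*c*Real.sqrt (d:ℝ)*N^k := key2
      _ = (2^(k+1)*c*N^k) * (d:ℝ)^((1:ℝ)/2) := by
          rw [Real.sqrt_eq_rpow]
          ring
  have hNk : (N:ℝ)^k = N ^ (((s:ℝ) - 2) : ℝ) := by
    rw [← Real.rpow_natCast N k, hkR]
  rw [hNk] at key3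
  have hfin := Real.rpow_le_rpow (le_of_lt (Real.rpow_pos_of_pos hdR _)) key3
    (le_of_lt (inv_pos.mpr hp))
  rw [← Real.rpow_mul (le_of_lt hdR), mul_inv_cancel₀ (ne_of_gt hp), Real.rpow_one] at hfin
  rw [Real.mul_rpow (by positivity) (by positivity), ← Real.rpow_mul (le_of_lt hNpos)] at hfin
  have hexp : ((s:ℝ) - 2) * ((s:ℝ) - 3/2)⁻¹ = 1 - 1/(2*(s:ℝ)-3) := by
    have h10 : (s:ℝ) - 3/2 ≠ 0 := ne_of_gt hp
    have h11 : 2*(s:ℝ) - 3 ≠ 0 := by intro h; apply h10; linarith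
    have h12 : ((s:ℝ)-2) * ((s:ℝ)-3/2)⁻¹ = (2*(s:ℝ)-4)/(2*(s:ℝ)-3) := by
      rw [inv_eq_one_div, mul_one_div, div_eq_div_iff h10 h11]
      ring
    rw [h12]
    field_simp
    ring
  rw [hexp] at hfin
  have hK'le : ((2:ℝ)^(k+1)*c) ^ (((s:ℝ) - 3/2))⁻¹ ≤ C := by
    rw [hCdef, show k+1 = s-1 from by omega]
    exact le_max_right _ _
  calc (d:ℝ) ≤ ((2:ℝ)^(k+1)*c) ^ (((s:ℝ)-3/2))⁻¹ * N ^ (1 - 1/(2*(s:ℝ)-3)) := hfin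
    _ ≤ C * N ^ (1 - 1/(2*(s:ℝ)-3)) := mul_le_mul_of_nonneg_right hK'le hNe0
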